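/- Let H = (V, E) be a hypergraph with a finite relation R_F over each hyperedge F ∈ E, let V_b be a proper subset of V (the bound variables), let u be a fractional edge cover of V, and let α = min_{x ∈ V \ V_b} Σ_{F ∈ E, x ∈ F} u_F be its slack. Then for every real T > 0, the set of tuples a over V_b satisfying ∏_{F ∈ E} |R_F(a)|^{u_F/α} > T is finite and has cardinality at most (∏_{F ∈ E} |R_F|^{u_F}) / T^α. -/

import Mathlib

private lemma myAddRpow {x y p : ℝ} (hx : 0 ≤ x) (hy : 0 ≤ y) (hp : 1 ≤ p) :
    x ^ p + y ^ p ≤ (x + y) ^ p := by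
  lift x to NNReal using hx
  lift y to NNReal using hy
  have := NNReal.add_rpow_le_rpow_add x y hp
  exact_mod_cast this

private lemma mySumRpow {β : Type*} (s : Finset β) (n : β → ℝ) (hn : ∀ b ∈ s, 0 ≤ n b)
    {p : ℝ} (hp : 1 ≤ p) :
    ∑ b ∈ s, n b ^ p ≤ (∑ b ∈ s, n b) ^ p := by
  induction s using Finset.cons_induction with
  | empty => simp [Real.zero_rpow (by positivity : p ≠ 0)]
  | cons a s ha ih =>
    rw [Finset.sum_cons, Finset.sum_cons]
    have h0 : 0 ≤ ∑ b ∈ s, n b := Finset.sum_nonneg fun b hb => hn b (Finset.mem_cons_of_mem hb)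
    have h1 := ih (fun b hb => hn b (Finset.mem_cons_of_mem hb))
    calc n a ^ p + ∑ b ∈ s, n b ^ p ≤ n a ^ p + (∑ b ∈ s, n b) ^ p := by linarith
      _ ≤ (n a + ∑ b ∈ s, n b) ^ p :=
        myAddRpow (hn a (Finset.mem_cons_self ..)) h0 hp

private lemma myHolderOne {β γ : Type*} (s : Finset β) (G : Finset γ) (θ : γ → ℝ)
    (hθ0 : ∀ F ∈ G, 0 ≤ θ F) (hθ1 : ∑ F ∈ G, θ F = 1)
    (g : γ → β → ℝ) (hg : ∀ F ∈ G, ∀ b ∈ s, 0 ≤ g F b) :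
    ∑ b ∈ s, ∏ F ∈ G, g F b ^ θ F ≤ ∏ F ∈ G, (∑ b ∈ s, g F b) ^ θ F := by
  set GF : γ → ℝ := fun F => ∑ b ∈ s, g F b with hGF
  have hGF0 : ∀ F ∈ G, 0 ≤ GF F := fun F hF => Finset.sum_nonneg fun b hb => hg F hF b hb
  by_cases hz : ∃ F ∈ G, θ F ≠ 0 ∧ GF F = 0
  · obtain ⟨F₀, hF₀, hθF₀, hGF₀⟩ := hz
    have hg0 : ∀ b ∈ s, g F₀ b = 0 := by
      intro b hb
      have := (Finset.sum_eq_zero_iff_of_nonneg (fun b hb => hg F₀ hF₀ b hb)).1 hGF₀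
      exact this b hb
    have hL : ∑ b ∈ s, ∏ F ∈ G, g F b ^ θ F = 0 := by
      apply Finset.sum_eq_zero
      intro b hb
      apply Finset.prod_eq_zero hF₀
      rw [hg0 b hb]
      exact Real.zero_rpow hθF₀
    rw [hL]
    exact Finset.prod_nonneg fun F hF => Real.rpow_nonneg (hGF0 F hF) _
  · push_neg at hz
    have hpos : ∀ F ∈ G, θ F ≠ 0 → 0 < GF F := by
      intro F hF hθF
      exact lt_of_le_of_ne (hGF0 F hF) (Ne.symm (hz F hF hθF))
    have hP : 0 < ∏ F ∈ G, GF F ^ θ F := by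
      apply Finset.prod_pos
      intro F hF
      rcases eq_or_ne (θ F) 0 with h | h
      · rw [h, Real.rpow_zero]; exact one_pos
      · exact Real.rpow_pos_of_pos (hpos F hF h) _
    rw [← div_le_one hP, Finset.sum_div]
    calc ∑ b ∈ s, (∏ F ∈ G, g F b ^ θ F) / (∏ F ∈ G, GF F ^ θ F)
        = ∑ b ∈ s, ∏ F ∈ G, (g F b / GF F) ^ θ F := by
          apply Finset.sum_congr rfl
          intro b hb
          rw [← Finset.prod_div_distrib]
          exact Finset.prod_congr rfl fun F hF =>
            (Real.div_rpow (hg F hF b hb) (hGF0 F hF) _).symm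
      _ ≤ ∑ b ∈ s, ∑ F ∈ G, θ F * (g F b / GF F) := by
          apply Finset.sum_le_sum
          intro b hb
          exact Real.geom_mean_le_arith_mean_weighted G θ _ hθ0 hθ1
            (fun F hF => div_nonneg (hg F hF b hb) (hGF0 F hF))
      _ = ∑ F ∈ G, θ F * (GF F / GF F) := by
          rw [Finset.sum_comm]
          apply Finset.sum_congr rfl
          intro F hF
          rw [← Finset.mul_sum, ← Finset.sum_div]
      _ = 1 := by
          rw [← hθ1]
          apply Finset.sum_congr rfl
          intro F hF
          rcases eq_or_ne (θ F) 0 with h | h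
          · rw [h, zero_mul]
          · rw [div_self (ne_of_gt (hpos F hF h)), mul_one]

private lemma myHolderGe {β γ : Type*} (s : Finset β) (G : Finset γ) (w : γ → ℝ)
    (hw0 : ∀ F ∈ G, 0 ≤ w F) (hw1 : 1 ≤ ∑ F ∈ G, w F)
    (n : γ → β → ℝ) (hn : ∀ F ∈ G, ∀ b ∈ s, 0 ≤ n F b) :
    ∑ b ∈ s, ∏ F ∈ G, n F b ^ w F ≤ ∏ F ∈ G, (∑ b ∈ s, n F b) ^ w F := by
  set σ : ℝ := ∑ F ∈ G, w F with hσ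
  have hσ0 : 0 < σ := lt_of_lt_of_le one_pos hw1
  have key := myHolderOne s G (fun F => w F / σ)
    (fun F hF => div_nonneg (hw0 F hF) hσ0.le)
    (by rw [← Finset.sum_div, div_self hσ0.ne'])
    (fun F b => n F b ^ σ)
    (fun F hF b hb => Real.rpow_nonneg (hn F hF b hb) _)
  have hrw : ∀ F ∈ G, ∀ b ∈ s, (n F b ^ σ) ^ (w F / σ) = n F b ^ w F := by
    intro F hF b hb
    rw [← Real.rpow_mul (hn F hF b hb)]
    congr 1
    field_simp
  calc ∑ b ∈ s, ∏ F ∈ G, n F b ^ w F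
      = ∑ b ∈ s, ∏ F ∈ G, (n F b ^ σ) ^ (w F / σ) := by
        exact Finset.sum_congr rfl fun b hb =>
          Finset.prod_congr rfl fun F hF => (hrw F hF b hb).symm
    _ ≤ ∏ F ∈ G, (∑ b ∈ s, n F b ^ σ) ^ (w F / σ) := key
    _ ≤ ∏ F ∈ G, ((∑ b ∈ s, n F b) ^ σ) ^ (w F / σ) := by
        apply Finset.prod_le_prod
        · intro F hF
          exact Real.rpow_nonneg
            (Finset.sum_nonneg fun b hb => Real.rpow_nonneg (hn F hF b hb) _) _
        · intro F hF
          apply Real.rpow_le_rpow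
          · exact Finset.sum_nonneg fun b hb => Real.rpow_nonneg (hn F hF b hb) _
          · exact mySumRpow s (n F) (fun b hb => hn F hF b hb) hw1
          · exact div_nonneg (hw0 F hF) hσ0.le
    _ = ∏ F ∈ G, (∑ b ∈ s, n F b) ^ w F := by
        apply Finset.prod_congr rfl
        intro F hF
        rw [← Real.rpow_mul (Finset.sum_nonneg fun b hb => hn F hF b hb)]
        congr 1
        field_simp

private lemma mySumNcard {α β : Type*} (t : Finset β) (S : β → Set α) (S' : Set α)
    (hS' : S'.Finite) (hsub : ∀ b ∈ t, S b ⊆ S')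
    (hdisj : ∀ b ∈ t, ∀ c ∈ t, b ≠ c → Disjoint (S b) (S c)) :
    ∑ b ∈ t, (S b).ncard ≤ S'.ncard := by
  induction t using Finset.cons_induction generalizing S' with
  | empty => simp
  | cons a t ha ih =>
    rw [Finset.sum_cons]
    have hSa : S a ⊆ S' := hsub a (Finset.mem_cons_self ..)
    have h1 : ∑ b ∈ t, (S b).ncard ≤ (S' \ S a).ncard := by
      apply ih (S' \ S a) hS'.diff
      · intro b hb
        have hd := hdisj a (Finset.mem_cons_self ..) b (Finset.mem_cons_of_mem hb)
          (by rintro rfl; exact ha hb)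
        intro x hx
        exact ⟨hsub b (Finset.mem_cons_of_mem hb) hx, fun hxa => hd.ne_of_mem hxa hx rfl⟩
      · intro b hb c hc hbc
        exact hdisj b (Finset.mem_cons_of_mem hb) c (Finset.mem_cons_of_mem hc) hbc
    have h2 : (S' \ S a).ncard + (S a).ncard = S'.ncard :=
      Set.ncard_diff_add_ncard_of_subset hSa hS'
    omega

private lemma myKey {V : Type*} [DecidableEq V]
    (D : V → Type*) (E : Finset (Finset V))
    (R : (F : Finset V) → Set ((x : F) → D x.1))
    (hRfin : ∀ F ∈ E, (R F).Finite)
    (u : Finset V → ℝ) (hu0 : ∀ F ∈ E, 0 ≤ u F)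
    (B : Finset V) :
    (∀ x ∈ B, 1 ≤ ∑ F ∈ E, if x ∈ F then u F else 0) →
    ∀ (A : Finset ((x : B) → D x.1)),
    (∑ a ∈ A, ∏ F ∈ E, (({s ∈ R F | ∀ (x : V) (hF : x ∈ F) (hb : x ∈ B),
        s ⟨x, hF⟩ = a ⟨x, hb⟩}).ncard : ℝ) ^ (u F))
      ≤ ∏ F ∈ E, ((R F).ncard : ℝ) ^ (u F) := by
  classical
  induction B using Finset.strongInduction with
  | _ B ih =>
  intro hcov A
  have hRHS0 : (0:ℝ) ≤ ∏ F ∈ E, ((R F).ncard : ℝ) ^ (u F) :=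
    Finset.prod_nonneg fun F hF => Real.rpow_nonneg (by positivity) _
  rcases B.eq_empty_or_nonempty with rfl | ⟨x₀, hx₀⟩
  · -- base case
    have hconst : ∀ a ∈ A, (∏ F ∈ E, (({s ∈ R F | ∀ (x : V) (hF : x ∈ F)
          (hb : x ∈ (∅ : Finset V)), s ⟨x, hF⟩ = a ⟨x, hb⟩}).ncard : ℝ) ^ (u F))
        = ∏ F ∈ E, ((R F).ncard : ℝ) ^ (u F) := by
      intro a _
      apply Finset.prod_congr rfl
      intro F _
      have hset : {s ∈ R F | ∀ (x : V) (hF : x ∈ F) (hb : x ∈ (∅ : Finset V)),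
          s ⟨x, hF⟩ = a ⟨x, hb⟩} = R F := by
        ext s
        simp only [Set.mem_setOf_eq, and_iff_left_iff_imp]
        intro _ x _ hb
        exact absurd hb (Finset.notMem_empty x)
      rw [hset]
    rw [Finset.sum_congr rfl hconst, Finset.sum_const, nsmul_eq_mul]
    have hcard : A.card ≤ 1 := by
      apply Finset.card_le_one.2
      intro a ha b hb
      funext x
      exact absurd x.2 (Finset.notMem_empty x.1)
    calc (A.card : ℝ) * ∏ F ∈ E, ((R F).ncard : ℝ) ^ (u F)
        ≤ 1 * ∏ F ∈ E, ((R F).ncard : ℝ) ^ (u F) := by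
          apply mul_le_mul_of_nonneg_right _ hRHS0
          exact_mod_cast hcard
      _ = _ := one_mul _
  · -- inductive step
    set B' := B.erase x₀ with hB'
    have hB'ss : B' ⊂ B := Finset.erase_ssubset hx₀
    have hsubB : B' ⊆ B := Finset.erase_subset _ _
    set π : ((x : B) → D x.1) → ((x : B') → D x.1) :=
      fun a x => a ⟨x.1, hsubB x.2⟩ with hπ
    set A' := A.image π with hA'
    -- notation for the matching sets
    set SB : (F : Finset V) → ((x : B) → D x.1) → Set ((x : F) → D x.1) := fun F a =>
      {s ∈ R F | ∀ (x : V) (hF : x ∈ F) (hb : x ∈ B), s ⟨x, hF⟩ = a ⟨x, hb⟩} with hSB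
    set SB' : (F : Finset V) → ((x : B') → D x.1) → Set ((x : F) → D x.1) := fun F a' =>
      {s ∈ R F | ∀ (x : V) (hF : x ∈ F) (hb : x ∈ B'), s ⟨x, hF⟩ = a' ⟨x, hb⟩} with hSB'
    have hSB'fin : ∀ F ∈ E, ∀ a', (SB' F a').Finite := by
      intro F hF a'
      exact (hRfin F hF).subset (fun s hs => hs.1)
    have hfib_inj : ∀ a ∈ A, ∀ c ∈ A, π a = π c → a ⟨x₀, hx₀⟩ = c ⟨x₀, hx₀⟩ → a = c := by
      intro a _ c _ hπac h0
      funext x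
      rcases eq_or_ne x.1 x₀ with hx | hx
      · obtain ⟨y, hyB⟩ := x
        simp only at hx
        subst hx
        exact h0
      · have hxB' : x.1 ∈ B' := Finset.mem_erase.2 ⟨hx, x.2⟩
        exact congrFun hπac ⟨x.1, hxB'⟩
    have hmaps : ∀ a ∈ A, π a ∈ A' := fun a ha => Finset.mem_image_of_mem π ha
    rw [← Finset.sum_fiberwise_of_maps_to hmaps]
    have hfiber : ∀ a' ∈ A',
        (∑ a ∈ A.filter (fun a => π a = a'), ∏ F ∈ E, ((SB F a).ncard : ℝ) ^ (u F))
        ≤ ∏ F ∈ E, ((SB' F a').ncard : ℝ) ^ (u F) := by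
      intro a' _
      set Φ := A.filter (fun a => π a = a') with hΦ
      have hΦA : ∀ a ∈ Φ, a ∈ A := fun a ha => (Finset.mem_filter.1 ha).1
      have hmatch : ∀ a ∈ Φ, ∀ (x : V) (hb' : x ∈ B'), a ⟨x, hsubB hb'⟩ = a' ⟨x, hb'⟩ := by
        intro a ha x hb'
        exact congrFun (Finset.mem_filter.1 ha).2 ⟨x, hb'⟩
      have hsub : ∀ F ∈ E, ∀ a ∈ Φ, SB F a ⊆ SB' F a' := by
        intro F _ a ha s hs
        exact ⟨hs.1, fun x hF hb' => (hs.2 x hF (hsubB hb')).trans (hmatch a ha x hb')⟩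
      have hEq : ∀ a ∈ Φ, ∀ F ∈ E, x₀ ∉ F → SB F a = SB' F a' := by
        intro a ha F hFE hx₀F
        apply Set.Subset.antisymm (hsub F hFE a ha)
        intro s hs
        refine ⟨hs.1, fun x hF hb => ?_⟩
        have hb' : x ∈ B' := Finset.mem_erase.2 ⟨fun h => hx₀F (h ▸ hF), hb⟩
        exact (hs.2 x hF hb').trans (hmatch a ha x hb').symm
      have hdisj : ∀ F ∈ E, x₀ ∈ F → ∀ a ∈ Φ, ∀ c ∈ Φ, a ≠ c →
          Disjoint (SB F a) (SB F c) := by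
        intro F hFE hx₀F a ha c hc hac
        rw [Set.disjoint_left]
        intro s hsa hsc
        have h1 : s ⟨x₀, hx₀F⟩ = a ⟨x₀, hx₀⟩ := hsa.2 x₀ hx₀F hx₀
        have h2 : s ⟨x₀, hx₀F⟩ = c ⟨x₀, hx₀⟩ := hsc.2 x₀ hx₀F hx₀
        have hπac : π a = π c := by
          rw [(Finset.mem_filter.1 ha).2, (Finset.mem_filter.1 hc).2]
        exact hac (hfib_inj a (hΦA a ha) c (hΦA c hc) hπac (h1.symm.trans h2))
      have hcount : ∀ F ∈ E, x₀ ∈ F →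
          (∑ a ∈ Φ, ((SB F a).ncard : ℝ)) ≤ ((SB' F a').ncard : ℝ) := by
        intro F hFE hx₀F
        rw [← Nat.cast_sum]
        exact_mod_cast mySumNcard Φ (SB F ·) (SB' F a') (hSB'fin F hFE a')
          (fun a ha => hsub F hFE a ha) (fun a ha c hc hac => hdisj F hFE hx₀F a ha c hc hac)
      -- split each term of the sum
      have hsplit : ∀ a ∈ Φ, (∏ F ∈ E, ((SB F a).ncard : ℝ) ^ (u F))
          = (∏ F ∈ E.filter (fun F => x₀ ∈ F), ((SB F a).ncard : ℝ) ^ (u F)) *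
            (∏ F ∈ E.filter (fun F => ¬ x₀ ∈ F), ((SB' F a').ncard : ℝ) ^ (u F)) := by
        intro a ha
        rw [← Finset.prod_filter_mul_prod_filter_not E (fun F => x₀ ∈ F)]
        congr 1
        apply Finset.prod_congr rfl
        intro F hF
        rw [hEq a ha F (Finset.mem_filter.1 hF).1 (Finset.mem_filter.1 hF).2]
      rw [Finset.sum_congr rfl hsplit, ← Finset.sum_mul]
      have hC0 : (0:ℝ) ≤ ∏ F ∈ E.filter (fun F => ¬ x₀ ∈ F), ((SB' F a').ncard : ℝ) ^ (u F) :=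
        Finset.prod_nonneg fun F _ => Real.rpow_nonneg (by positivity) _
      have hw1 : 1 ≤ ∑ F ∈ E.filter (fun F => x₀ ∈ F), u F := by
        rw [Finset.sum_filter]
        exact hcov x₀ hx₀
      have hH := myHolderGe Φ (E.filter (fun F => x₀ ∈ F)) u
        (fun F hF => hu0 F (Finset.mem_filter.1 hF).1) hw1
        (fun F a => ((SB F a).ncard : ℝ)) (fun F _ a _ => by positivity)
      have hmid : (∑ a ∈ Φ, ∏ F ∈ E.filter (fun F => x₀ ∈ F), ((SB F a).ncard : ℝ) ^ (u F))
          ≤ ∏ F ∈ E.filter (fun F => x₀ ∈ F), ((SB' F a').ncard : ℝ) ^ (u F) := by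
        refine hH.trans (Finset.prod_le_prod (fun F _ => Real.rpow_nonneg
          (Finset.sum_nonneg fun a _ => by positivity) _) (fun F hF => ?_))
        apply Real.rpow_le_rpow (Finset.sum_nonneg fun a _ => by positivity)
          (hcount F (Finset.mem_filter.1 hF).1 (Finset.mem_filter.1 hF).2)
          (hu0 F (Finset.mem_filter.1 hF).1)
      calc (∑ a ∈ Φ, ∏ F ∈ E.filter (fun F => x₀ ∈ F), ((SB F a).ncard : ℝ) ^ (u F)) *
            (∏ F ∈ E.filter (fun F => ¬ x₀ ∈ F), ((SB' F a').ncard : ℝ) ^ (u F))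
          ≤ (∏ F ∈ E.filter (fun F => x₀ ∈ F), ((SB' F a').ncard : ℝ) ^ (u F)) *
            (∏ F ∈ E.filter (fun F => ¬ x₀ ∈ F), ((SB' F a').ncard : ℝ) ^ (u F)) :=
            mul_le_mul_of_nonneg_right hmid hC0
        _ = ∏ F ∈ E, ((SB' F a').ncard : ℝ) ^ (u F) :=
            Finset.prod_filter_mul_prod_filter_not E _ _
    calc (∑ a' ∈ A', ∑ a ∈ A.filter (fun a => π a = a'),
            ∏ F ∈ E, ((SB F a).ncard : ℝ) ^ (u F))
        ≤ ∑ a' ∈ A', ∏ F ∈ E, ((SB' F a').ncard : ℝ) ^ (u F) :=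
          Finset.sum_le_sum hfiber
      _ ≤ ∏ F ∈ E, ((R F).ncard : ℝ) ^ (u F) :=
          ih B' hB'ss (fun x hx => hcov x (hsubB hx)) A'


/-- Let `H = (V, E)` be a hypergraph (every variable lies in some hyperedge)
with a finite relation `R F` over each hyperedge `F ∈ E`, let `Vb` be a proper subset of `V`
(the bound variables), let `u` be a fractional edge cover of `V`, and let
`α = min_{x ∈ V \ Vb} Σ_{F ∈ E, x ∈ F} u F` be its slack.  Then for every real `T > 0`,
the set of tuples `a` over `Vb` satisfying `∏_{F ∈ E} |R_F(a)| ^ (u F / α) > T` is finite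
and has cardinality at most `(∏_{F ∈ E} |R F| ^ (u F)) / T ^ α`. -/
theorem stmt0 {V : Type*} [Fintype V] [DecidableEq V]
    (D : V → Type*)
    (E : Finset (Finset V))
    (hcover : ∀ x : V, ∃ F ∈ E, x ∈ F)
    (R : (F : Finset V) → Set ((x : F) → D x.1))
    (hRfin : ∀ F ∈ E, (R F).Finite)
    (Vb : Finset V) (hVb : Vb ≠ Finset.univ)
    (u : Finset V → ℝ)
    (hu0 : ∀ F ∈ E, 0 ≤ u F)
    (hucov : ∀ x : V, 1 ≤ ∑ F ∈ E, if x ∈ F then u F else 0)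
    (α : ℝ)
    (hα : IsLeast {s : ℝ | ∃ x : V, x ∉ Vb ∧ s = ∑ F ∈ E, if x ∈ F then u F else 0} α)
    (T : ℝ) (hT : 0 < T) :
    {a : (x : Vb) → D x.1 |
        T < ∏ F ∈ E,
          (({s ∈ R F | ∀ (x : V) (hF : x ∈ F) (hb : x ∈ Vb),
              s ⟨x, hF⟩ = a ⟨x, hb⟩}).ncard : ℝ) ^ (u F / α)}.Finite ∧
    (({a : (x : Vb) → D x.1 |
        T < ∏ F ∈ E,
          (({s ∈ R F | ∀ (x : V) (hF : x ∈ F) (hb : x ∈ Vb),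
              s ⟨x, hF⟩ = a ⟨x, hb⟩}).ncard : ℝ) ^ (u F / α)}).ncard : ℝ)
      ≤ (∏ F ∈ E, ((R F).ncard : ℝ) ^ (u F)) / T ^ α := by
  classical
  obtain ⟨⟨x₁, hx₁, hαeq⟩, hlb⟩ := hα
  have hα1 : (1:ℝ) ≤ α := hαeq ▸ hucov x₁
  have hα0 : (0:ℝ) < α := lt_of_lt_of_le one_pos hα1
  set Aset := {a : (x : Vb) → D x.1 |
      T < ∏ F ∈ E,
        (({s ∈ R F | ∀ (x : V) (hF : x ∈ F) (hb : x ∈ Vb),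
            s ⟨x, hF⟩ = a ⟨x, hb⟩}).ncard : ℝ) ^ (u F / α)} with hAset
  -- choose for each variable a hyperedge with positive weight containing it
  have hchoice : ∀ x : V, ∃ F, F ∈ E ∧ x ∈ F ∧ 0 < u F := by
    intro x
    by_contra h
    push_neg at h
    have hle : ∑ F ∈ E, (if x ∈ F then u F else 0) ≤ 0 := by
      apply Finset.sum_nonpos
      intro F hF
      split_ifs with hxF
      · exact h F hF hxF
      · exact le_refl 0
    linarith [hucov x]
  choose Fx hFxE hFxmem hFxu using hchoice
  -- finiteness
  have hfin : Aset.Finite := by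
    apply Set.Finite.subset (Set.Finite.pi (t := fun x : Vb =>
      (fun s : (y : Fx x.1) → D y.1 => s ⟨x.1, hFxmem x.1⟩) '' (R (Fx x.1)))
      (fun x => (hRfin _ (hFxE x.1)).image _))
    intro a ha
    rw [Set.mem_univ_pi]
    intro x
    have hprod : (0:ℝ) < ∏ F ∈ E,
        (({s ∈ R F | ∀ (y : V) (hF : y ∈ F) (hb : y ∈ Vb),
            s ⟨y, hF⟩ = a ⟨y, hb⟩}).ncard : ℝ) ^ (u F / α) := hT.trans ha
    have hne : (({s ∈ R (Fx x.1) | ∀ (y : V) (hF : y ∈ Fx x.1) (hb : y ∈ Vb),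
        s ⟨y, hF⟩ = a ⟨y, hb⟩}).ncard : ℝ) ^ (u (Fx x.1) / α) ≠ 0 := by
      intro h0
      rw [Finset.prod_eq_zero (hFxE x.1) h0] at hprod
      exact lt_irrefl 0 hprod
    have hSne : ({s ∈ R (Fx x.1) | ∀ (y : V) (hF : y ∈ Fx x.1) (hb : y ∈ Vb),
        s ⟨y, hF⟩ = a ⟨y, hb⟩}).Nonempty := by
      rw [Set.nonempty_iff_ne_empty]
      intro hemp
      apply hne
      rw [hemp]
      simp only [Set.ncard_empty, Nat.cast_zero]
      exact Real.zero_rpow (ne_of_gt (div_pos (hFxu x.1) hα0))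
    obtain ⟨s, hsR, hsm⟩ := hSne
    exact ⟨s, hsR, hsm x.1 (hFxmem x.1) x.2⟩
  refine ⟨hfin, ?_⟩
  set A := hfin.toFinset with hA
  have hncard : Aset.ncard = A.card := Set.ncard_eq_toFinset_card _ hfin
  have hpt : ∀ a ∈ A, T ^ α ≤ ∏ F ∈ E,
      (({s ∈ R F | ∀ (x : V) (hF : x ∈ F) (hb : x ∈ Vb),
          s ⟨x, hF⟩ = a ⟨x, hb⟩}).ncard : ℝ) ^ (u F) := by
    intro a haA
    have ha : a ∈ Aset := (Set.Finite.mem_toFinset hfin).1 haA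
    have h1 : T ^ α ≤ (∏ F ∈ E,
        (({s ∈ R F | ∀ (x : V) (hF : x ∈ F) (hb : x ∈ Vb),
            s ⟨x, hF⟩ = a ⟨x, hb⟩}).ncard : ℝ) ^ (u F / α)) ^ α :=
      Real.rpow_le_rpow hT.le (le_of_lt ha) hα0.le
    refine h1.trans_eq ?_
    rw [← Real.finset_prod_rpow E _ (fun F _ => Real.rpow_nonneg (by positivity) _) α]
    apply Finset.prod_congr rfl
    intro F _
    rw [← Real.rpow_mul (by positivity), div_mul_cancel₀ _ hα0.ne']
  have hsum := myKey D E R hRfin u hu0 Vb (fun x _ => hucov x) A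
  have hchain : (A.card : ℝ) * T ^ α ≤ ∏ F ∈ E, ((R F).ncard : ℝ) ^ (u F) := by
    calc (A.card : ℝ) * T ^ α = ∑ _a ∈ A, T ^ α := by
          rw [Finset.sum_const, nsmul_eq_mul]
      _ ≤ ∑ a ∈ A, ∏ F ∈ E, (({s ∈ R F | ∀ (x : V) (hF : x ∈ F) (hb : x ∈ Vb),
            s ⟨x, hF⟩ = a ⟨x, hb⟩}).ncard : ℝ) ^ (u F) := Finset.sum_le_sum hpt
      _ ≤ _ := hsum
  rw [hncard, le_div_iff₀ (Real.rpow_pos_of_pos hT α)]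
  exact hchain
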